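/- Let ℝ³ = Fin 3 → ℝ with the Euclidean dot product ⟪u, v⟫ = ∑ i, u i * v i and cross product ×. Let N, f₁, f₂, w, c₁, c₂ ∈ ℝ³ and b ∈ ℝ with ⟪N, N⟫ = 1, ⟪f₁, f₁⟫ = 1, ⟪f₂, f₂⟫ = 1, ⟪f₁, N⟫ = 0, ⟪f₂, N⟫ = 0, and b > 0. Define D = ⟪f₂ × N, f₁⟫, s = ⟪w, c₂ − c₁⟫, M₁ = ⟪f₁ × f₂, f₁ × f₂⟫, M₂ = s − b * D, and M₃ = s. Then (f₁ × f₂ = 0 ∨ s / D ≥ b ∨ s / D ≤ 0) ↔ M₁ * M₂ * M₃ ≥ 0 (division by zero being the Lean convention s / 0 = 0). -/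

import Mathlib

open Matrix

/-- The Euclidean dot product on `Fin 3 → ℝ`. -/
def dot3 (u v : Fin 3 → ℝ) : ℝ := ∑ i, u i * v i

/-- The paper's final proposition: one of the non-crossing conditions
M2.1: `f₁ × f₂ = 0`, M2.2: `s / D ≥ b`, M2.3: `s / D ≤ 0` holds if and only if
`M₁ M₂ M₃ ≥ 0`, where `D = (f₂ × N)·f₁`, `s = w·(c₂ − c₁)`,
`M₁ = |f₁ × f₂|²`, `M₂ = s − bD`, `M₃ = s` (division by zero following the
Lean convention `s / 0 = 0`). -/
theorem stmt14 (N f₁ f₂ w c₁ c₂ : Fin 3 → ℝ) (b : ℝ)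
    (hN : dot3 N N = 1) (hf₁ : dot3 f₁ f₁ = 1) (hf₂ : dot3 f₂ f₂ = 1)
    (hf₁N : dot3 f₁ N = 0) (hf₂N : dot3 f₂ N = 0) (hb : 0 < b)
    (D s M₁ M₂ M₃ : ℝ)
    (hD : D = dot3 (f₂ ⨯₃ N) f₁)
    (hs : s = dot3 w (c₂ - c₁))
    (hM₁ : M₁ = dot3 (f₁ ⨯₃ f₂) (f₁ ⨯₃ f₂))
    (hM₂ : M₂ = s - b * D) (hM₃ : M₃ = s) :
    (f₁ ⨯₃ f₂ = 0 ∨ s / D ≥ b ∨ s / D ≤ 0) ↔ M₁ * M₂ * M₃ ≥ 0 := by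
  -- scalar triple product cyclicity
  have triple : dot3 (f₂ ⨯₃ N) f₁ = dot3 (f₁ ⨯₃ f₂) N := by
    simp [dot3, crossProduct, Fin.sum_univ_three]; ring
  -- Lagrange-type identity
  have key : dot3 (f₁ ⨯₃ f₂) (f₁ ⨯₃ f₂) * dot3 N N - dot3 (f₁ ⨯₃ f₂) N ^ 2 =
      dot3 f₁ N ^ 2 * dot3 f₂ f₂ - 2 * dot3 f₁ N * dot3 f₂ N * dot3 f₁ f₂
        + dot3 f₂ N ^ 2 * dot3 f₁ f₁ := by
    simp [dot3, crossProduct, Fin.sum_univ_three]; ring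
  rw [hN, hf₁N, hf₂N] at key
  have hM₁D : M₁ = D ^ 2 := by
    rw [hM₁, hD, triple]; linarith [key]
  have hzero : f₁ ⨯₃ f₂ = 0 ↔ M₁ = 0 := by
    constructor
    · intro h; simp [hM₁, h, dot3]
    · intro h
      rw [hM₁] at h
      have h' : ∀ i ∈ Finset.univ, (f₁ ⨯₃ f₂) i * (f₁ ⨯₃ f₂) i = 0 :=
        (Finset.sum_eq_zero_iff_of_nonneg fun i _ => mul_self_nonneg _).mp h
      funext i
      exact mul_self_eq_zero.mp (h' i (Finset.mem_univ i))
  rcases eq_or_ne D 0 with hD0 | hD0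
  · constructor
    · intro _
      have : M₁ = 0 := by rw [hM₁D, hD0]; ring
      rw [this]; simp
    · intro _
      right; right
      rw [hD0, div_zero]
  · have hsval : s = (s / D) * D := (div_mul_cancel₀ s hD0).symm
    set t := s / D with ht
    have hpos : (0:ℝ) < D ^ 2 * D ^ 2 := by positivity
    have hform : M₁ * M₂ * M₃ = ((t - b) * t) * (D ^ 2 * D ^ 2) := by
      rw [hM₁D, hM₂, hM₃, hsval]; ring
    constructor
    · intro h
      rcases h with h | h | h
      · have : M₁ = 0 := hzero.mp h
        have : D ^ 2 = 0 := by rw [← hM₁D]; exact this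
        exact absurd (pow_eq_zero_iff two_ne_zero |>.mp this) hD0
      · have ht0 : (t - b) * t ≥ 0 := by nlinarith
        rw [hform]; exact mul_nonneg ht0 hpos.le
      · have ht0 : (t - b) * t ≥ 0 := by nlinarith
        rw [hform]; exact mul_nonneg ht0 hpos.le
    · intro h
      rw [hform] at h
      have ht0 : (t - b) * t ≥ 0 := le_of_mul_le_mul_right (by linarith) hpos
      by_contra hc
      push_neg at hc
      obtain ⟨_, h2, h3⟩ := hc
      nlinarith
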